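/- Let (Ω_j, 𝓕_j, μ_j) for j = 1, …, n be probability spaces and μ the product measure on Ω = ∏_j Ω_j. For each nonempty s ⊆ [n], let 𝓑_s be the sub-σ-algebra of events depending only on the coordinates in s. Suppose for each s ⊆ [n] we have B_s ∈ 𝓑_s such that B_s is independent (under μ) of the σ-algebra generated by ⋃_{t ⊊ s} 𝓑_t, and moreover for every fixing of the coordinates outside a maximal s, such independence holds conditionally as in Fubini's theorem. Then μ(⋂_{s ⊆ [n]} B_s) = ∏_{s ⊆ [n]} μ(B_s). -/

import Mathlib

open MeasureTheory Set ProbabilityTheory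

variable {n : ℕ} {Ω : Fin n → Type*} [∀ j, MeasurableSpace (Ω j)]

/-- The sub-σ-algebra of the product space consisting of events depending only on
the coordinates in `s`. -/
def coordAlg (Ω : Fin n → Type*) [∀ j, MeasurableSpace (Ω j)] (s : Finset (Fin n)) :
    MeasurableSpace (∀ j, Ω j) :=
  MeasurableSpace.comap (fun ω => fun j : {j // j ∈ s} => ω j.1) inferInstance

lemma coordAlg_eq (s : Finset (Fin n)) :
    coordAlg Ω s
      = ⨆ j ∈ s, MeasurableSpace.comap (fun ω : ∀ j, Ω j => ω j) inferInstance := by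
  rw [coordAlg, iSup_subtype']
  show MeasurableSpace.comap _ MeasurableSpace.pi = _
  rw [MeasurableSpace.pi, MeasurableSpace.comap_iSup]
  simp only [MeasurableSpace.comap_comp, Function.comp_def]

lemma coordAlg_mono {s t : Finset (Fin n)} (h : s ⊆ t) : coordAlg Ω s ≤ coordAlg Ω t := by
  rw [coordAlg_eq, coordAlg_eq]
  exact biSup_mono h

lemma coordAlg_le (s : Finset (Fin n)) : coordAlg Ω s ≤ MeasurableSpace.pi := by
  rw [coordAlg_eq]
  exact iSup₂_le fun j _ => measurable_iff_comap_le.mp (measurable_pi_apply j)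

lemma pi_biInter_eval (μs : ∀ j, Measure (Ω j)) [∀ j, IsProbabilityMeasure (μs j)]
    (S : Finset (Fin n)) (t : ∀ i, Set (Ω i)) :
    Measure.pi μs (⋂ i ∈ S, (fun ω : ∀ j, Ω j => ω i) ⁻¹' t i) = ∏ i ∈ S, μs i (t i) := by
  classical
  have h1 : (⋂ i ∈ S, (fun ω : ∀ j, Ω j => ω i) ⁻¹' t i)
      = Set.pi univ (fun i => if i ∈ S then t i else univ) := by
    ext ω
    simp only [mem_iInter, mem_preimage, Set.mem_pi, mem_univ, true_implies]
    constructor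
    · intro h i; split_ifs with hi
      exacts [h i hi, mem_univ _]
    · intro h i hi; have := h i; rwa [if_pos hi] at this
  rw [h1, Measure.pi_pi]
  have h2 : ∀ i, μs i (if i ∈ S then t i else univ) = if i ∈ S then μs i (t i) else 1 := by
    intro i; split_ifs <;> simp
  simp_rw [h2]
  rw [Finset.prod_ite_mem, Finset.univ_inter]

lemma iIndepFun_eval (μs : ∀ j, Measure (Ω j)) [∀ j, IsProbabilityMeasure (μs j)] :
    iIndepFun (fun (i : Fin n) (ω : ∀ j, Ω j) => ω i)
      (Measure.pi μs) := by
  rw [iIndepFun_iff]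
  intro S f' hf'
  have hh : ∀ i ∈ S, ∃ t : Set (Ω i),
      MeasurableSet t ∧ (fun ω : ∀ j, Ω j => ω i) ⁻¹' t = f' i := hf'
  choose! t ht hteq using hh
  have hS : (⋂ i ∈ S, f' i) = ⋂ i ∈ S, (fun ω : ∀ j, Ω j => ω i) ⁻¹' t i :=
    Set.iInter₂_congr fun i hi => (hteq i hi).symm
  rw [hS, pi_biInter_eval]
  refine Finset.prod_congr rfl fun i hi => ?_
  rw [← hteq i hi]
  simpa using (pi_biInter_eval μs {i} t).symm

lemma indep_coordAlg_compl (μs : ∀ j, Measure (Ω j)) [∀ j, IsProbabilityMeasure (μs j)]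
    (s : Finset (Fin n)) :
    Indep (coordAlg Ω s) (coordAlg Ω sᶜ) (Measure.pi μs) := by
  have h := (iIndepFun_eval μs).indepFun_finset s sᶜ disjoint_compl_right
    (fun i => measurable_pi_apply i)
  rw [IndepFun_iff_Indep] at h
  exact h

/-- If `B ∈ mA`, `B` is independent of `g ≤ mA`, and `mA` is independent of `mC`,
then `B` is independent of `g ⊔ mC`. -/
lemma indep_set_sup {α : Type*} [mα : MeasurableSpace α] (μ : Measure α)
    [IsProbabilityMeasure μ] {B : Set α} {mA mC g : MeasurableSpace α}
    (hB : MeasurableSet[mA] B) (hgA : g ≤ mA) (hAα : mA ≤ mα) (hCα : mC ≤ mα)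
    (hAC : Indep mA mC μ)
    (h1g : ∀ A, MeasurableSet[g] A → μ (B ∩ A) = μ B * μ A) :
    ∀ A, MeasurableSet[g ⊔ mC] A → μ (B ∩ A) = μ B * μ A := by
  rw [Indep_iff] at hAC
  set p2 : Set (Set α) :=
    {x | ∃ a c, MeasurableSet[g] a ∧ MeasurableSet[mC] c ∧ x = a ∩ c} with hp2def
  have hgen2 : g ⊔ mC = MeasurableSpace.generateFrom p2 := by
    refine le_antisymm (sup_le ?_ ?_) (MeasurableSpace.generateFrom_le ?_)
    · intro a ha
      exact MeasurableSpace.measurableSet_generateFrom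
        ⟨a, univ, ha, MeasurableSet.univ, (Set.inter_univ a).symm⟩
    · intro c hc
      exact MeasurableSpace.measurableSet_generateFrom
        ⟨univ, c, MeasurableSet.univ, hc, (Set.univ_inter c).symm⟩
    · rintro x ⟨a, c, ha, hc, rfl⟩
      exact MeasurableSet.inter (le_sup_left (a := g) (b := mC) _ ha)
        (le_sup_right (a := g) (b := mC) _ hc)
  have hpi2 : IsPiSystem p2 := by
    rintro x ⟨a, c, ha, hc, rfl⟩ y ⟨a', c', ha', hc', rfl⟩ _
    exact ⟨a ∩ a', c ∩ c', ha.inter ha', hc.inter hc', by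
      rw [Set.inter_inter_inter_comm]⟩
  have hsets : IndepSets {B} p2 μ := by
    rw [IndepSets_iff]
    rintro x y hx ⟨a, c, ha, hc, rfl⟩
    rw [Set.mem_singleton_iff] at hx
    subst hx
    have h1 : μ (x ∩ (a ∩ c)) = μ (x ∩ a) * μ c := by
      rw [← Set.inter_assoc]
      exact hAC _ _ ((hB).inter (hgA _ ha)) hc
    rw [h1, h1g a ha, hAC a c (hgA _ ha) hc, mul_assoc]
  have hind : Indep (MeasurableSpace.generateFrom {B}) (g ⊔ mC) μ := by
    refine IndepSets.indep ?_ ?_ (IsPiSystem.singleton B) hpi2 rfl hgen2 hsets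
    · refine MeasurableSpace.generateFrom_le ?_
      rintro x rfl
      exact hAα _ hB
    · exact sup_le (hgA.trans hAα) hCα
  rw [Indep_iff] at hind
  intro A hA
  exact hind B A (MeasurableSpace.measurableSet_generateFrom rfl) hA

lemma measurableSet_biInter' {α β : Type*} {m : MeasurableSpace α} (S : Finset β)
    {f : β → Set α} (h : ∀ b ∈ S, MeasurableSet[m] (f b)) :
    MeasurableSet[m] (⋂ b ∈ S, f b) := by
  letI := m
  exact Finset.measurableSet_biInter S h

lemma stmt5_aux (μs : ∀ j, Measure (Ω j)) [∀ j, IsProbabilityMeasure (μs j)]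
    (B : Finset (Fin n) → Set (∀ j, Ω j))
    (hBmeas : ∀ s, MeasurableSet[coordAlg Ω s] (B s))
    (hind : ∀ s : Finset (Fin n), ∀ A : Set (∀ j, Ω j),
      MeasurableSet[⨆ t ∈ {t : Finset (Fin n) | t ⊂ s}, coordAlg Ω t] A →
      Measure.pi μs (B s ∩ A) = Measure.pi μs (B s) * Measure.pi μs A)
    (S : Finset (Finset (Fin n))) :
    Measure.pi μs (⋂ t ∈ S, B t) = ∏ t ∈ S, Measure.pi μs (B t) := by
  classical
  induction S using Finset.strongInduction with
  | _ S ih =>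
  rcases S.eq_empty_or_nonempty with rfl | hS
  · simp
  obtain ⟨s, hsS, hmax⟩ := S.exists_maximal hS
  have hGle : (⨆ t ∈ {t : Finset (Fin n) | t ⊂ s}, coordAlg Ω t) ≤ coordAlg Ω s :=
    iSup₂_le fun t ht => coordAlg_mono ht.subset
  have key := indep_set_sup (Measure.pi μs) (hBmeas s) hGle (coordAlg_le s)
    (coordAlg_le sᶜ) (indep_coordAlg_compl μs s) (hind s)
  have hA : MeasurableSet[(⨆ t ∈ {t : Finset (Fin n) | t ⊂ s}, coordAlg Ω t) ⊔ coordAlg Ω sᶜ] (⋂ t ∈ S.erase s, B t) := by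
    refine measurableSet_biInter' _ fun t ht => ?_
    have hnsub : ¬ s ⊆ t := by
      intro hsub
      exact (lt_of_le_of_ne hsub (Ne.symm (Finset.ne_of_mem_erase ht))).2
        (hmax (Finset.mem_of_mem_erase ht) hsub)
    have hle : coordAlg Ω t ≤ (⨆ t ∈ {t : Finset (Fin n) | t ⊂ s}, coordAlg Ω t) ⊔ coordAlg Ω sᶜ := by
      rw [coordAlg_eq]
      refine iSup₂_le fun j hj => ?_
      by_cases hjs : j ∈ s
      · refine le_trans ?_ le_sup_left
        have hts : t ∩ s ⊂ s := by
          refine Finset.ssubset_iff_subset_ne.mpr ⟨Finset.inter_subset_right, ?_⟩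
          intro h
          exact hnsub (h ▸ Finset.inter_subset_left)
        have h1 : MeasurableSpace.comap (fun ω : ∀ j, Ω j => ω j) inferInstance
            ≤ coordAlg Ω (t ∩ s) := by
          rw [coordAlg_eq]
          exact le_iSup₂ (f := fun (j' : Fin n) (_ : j' ∈ t ∩ s) =>
            MeasurableSpace.comap (fun ω : ∀ j, Ω j => ω j') inferInstance) j
            (Finset.mem_inter.mpr ⟨hj, hjs⟩)
        exact h1.trans (le_iSup₂ (f := fun (r : Finset (Fin n))
          (_ : r ∈ {t : Finset (Fin n) | t ⊂ s}) => coordAlg Ω r) (t ∩ s) hts)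
      · refine le_trans ?_ le_sup_right
        rw [coordAlg_eq]
        exact le_iSup₂ (f := fun (j' : Fin n) (_ : j' ∈ sᶜ) =>
          MeasurableSpace.comap (fun ω : ∀ j, Ω j => ω j') inferInstance) j
          (Finset.mem_compl.mpr hjs)
    exact hle _ (hBmeas t)
  have hstep : (⋂ t ∈ S, B t) = B s ∩ ⋂ t ∈ S.erase s, B t := by
    conv_lhs => rw [← Finset.insert_erase hsS]
    rw [Finset.set_biInter_insert]
  rw [hstep, key _ hA, ih (S.erase s) (Finset.erase_ssubset hsS),
    ← Finset.mul_prod_erase S _ hsS]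

theorem stmt5 (μs : ∀ j, Measure (Ω j)) [∀ j, IsProbabilityMeasure (μs j)]
    (B : Finset (Fin n) → Set (∀ j, Ω j))
    (hBmeas : ∀ s, MeasurableSet[coordAlg Ω s] (B s))
    (hind : ∀ s : Finset (Fin n), ∀ A : Set (∀ j, Ω j),
      MeasurableSet[⨆ t ∈ {t : Finset (Fin n) | t ⊂ s}, coordAlg Ω t] A →
      Measure.pi μs (B s ∩ A) = Measure.pi μs (B s) * Measure.pi μs A) :
    Measure.pi μs (⋂ s : Finset (Fin n), B s)
      = ∏ s : Finset (Fin n), Measure.pi μs (B s) := by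
  have := stmt5_aux μs B hBmeas hind Finset.univ
  simpa using this
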